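/- arXiv:1503.06906 — 3 statements merged into one kernel-verified Lean document; each statement's English description precedes it below -/
import Mathlib

section
/- For any real ε > 0, if k(n) = ε·log n, then the sequence of positive integers m that are not divisible by p^⌈k(m)⌉ for any prime p has bounded gaps: for all sufficiently large x, the interval [x, x + e^{1/ε} + 2) contains at least one such integer. -/
open Real Finset

theorem kfree_bounded_gaps (ε : ℝ) (hε : 0 < ε) :
    ∃ X : ℕ, ∀ x : ℕ, X ≤ x →
      ∃ m : ℕ, 0 < m ∧ x ≤ m ∧ (m : ℝ) < x + Real.exp (1 / ε) + 2 ∧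
        ¬ ∃ p : ℕ, p.Prime ∧ p ^ ⌈ε * Real.log m⌉₊ ∣ m := by
  classical
  set E : ℝ := Real.exp (1 / ε) with hE
  set M : ℕ := ⌊E⌋₊ with hM
  set N : ℕ := M + 1 with hN
  refine ⟨max 2 (⌈Real.exp (N / ε)⌉₊ + 1), fun x hx => ?_⟩
  have hx2 : 2 ≤ x := le_trans (le_max_left _ _) hx
  have hx0 : (0:ℝ) < x := by positivity
  have hxR : Real.exp (N / ε) ≤ (x:ℝ) := by
    have h1 : ⌈Real.exp (N / ε)⌉₊ + 1 ≤ x := le_trans (le_max_right _ _) hx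
    have h2 : Real.exp (N / ε) ≤ (⌈Real.exp (N / ε)⌉₊ : ℝ) := Nat.le_ceil _
    have h3 : ((⌈Real.exp (N / ε)⌉₊ : ℕ) : ℝ) ≤ (x : ℝ) := by
      exact_mod_cast le_trans (Nat.le_succ _) h1
    exact h2.trans h3
  -- K ≥ N where K = ⌈ε * log x⌉₊
  have hKN : N ≤ ⌈ε * Real.log x⌉₊ := by
    have h1 : (N : ℝ) / ε ≤ Real.log x := (Real.le_log_iff_exp_le hx0).mpr hxR
    have h2 : (N : ℝ) ≤ ε * Real.log x := by
      rw [div_le_iff₀ hε] at h1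
      linarith [h1]
    exact_mod_cast le_trans h2 (Nat.le_ceil _)
  set bad : ℕ → Prop := fun m => ∃ p : ℕ, p.Prime ∧ p ^ ⌈ε * Real.log m⌉₊ ∣ m
    with hbad
  -- every m in [x, x+N] that is bad has its witness prime p ∈ [2, M],
  -- and p ^ ⌈ε log x⌉₊ ∣ m
  have key : ∀ m : ℕ, x ≤ m → ∀ p : ℕ, p.Prime → p ^ ⌈ε * Real.log m⌉₊ ∣ m →
      (2 ≤ p ∧ p ≤ M) ∧ p ^ ⌈ε * Real.log x⌉₊ ∣ m := by
    intro m hxm p hp hdvd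
    have hm2 : 2 ≤ m := le_trans hx2 hxm
    have hm0 : 0 < m := by omega
    have hlogm : 0 < Real.log m := by
      apply Real.log_pos
      exact_mod_cast by omega
    set k : ℕ := ⌈ε * Real.log m⌉₊ with hk
    have hkR : ε * Real.log m ≤ (k : ℝ) := Nat.le_ceil _
    have hple : p ^ k ≤ m := Nat.le_of_dvd hm0 hdvd
    have hpleR : ((p : ℝ)) ^ k ≤ (m : ℝ) := by exact_mod_cast hple
    have hp0 : (0:ℝ) < p := by exact_mod_cast hp.pos
    have hlogp : (k : ℝ) * Real.log p ≤ Real.log m := by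
      have := Real.log_le_log (by positivity) hpleR
      rwa [Real.log_pow] at this
    have hlogp0 : 0 ≤ Real.log p := by
      apply Real.log_nonneg
      exact_mod_cast hp.one_lt.le
    -- ε * log p ≤ 1
    have hεp : ε * Real.log p ≤ 1 := by
      have h1 : (ε * Real.log m) * Real.log p ≤ (k:ℝ) * Real.log p :=
        mul_le_mul_of_nonneg_right hkR hlogp0
      have h2 : (ε * Real.log p) * Real.log m ≤ 1 * Real.log m := by
        nlinarith
      exact le_of_mul_le_mul_right (by linarith) hlogm
    have hpE : (p : ℝ) ≤ E := by
      rw [hE]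
      have : Real.log p ≤ 1 / ε := by
        rw [le_div_iff₀ hε]; linarith
      calc (p:ℝ) = Real.exp (Real.log p) := (Real.exp_log hp0).symm
        _ ≤ Real.exp (1/ε) := Real.exp_le_exp.mpr this
    have hpM : p ≤ M := Nat.le_floor hpE
    refine ⟨⟨hp.two_le, hpM⟩, ?_⟩
    refine dvd_trans (pow_dvd_pow p ?_) hdvd
    apply Nat.ceil_le_ceil
    have : Real.log x ≤ Real.log m := Real.log_le_log hx0 (by exact_mod_cast hxm)
    nlinarith
  -- the finset argument
  set S : Finset ℕ := Finset.Icc x (x + N) with hS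
  have hgood : ∃ m ∈ S, ¬ bad m := by
    by_contra hcon
    push_neg at hcon
    -- choice function
    set f : ℕ → ℕ := fun m => if h : bad m then h.choose else 0 with hf
    have hinj : Set.InjOn f S := by
      intro a ha b hb hab
      by_contra hne
      have hba : bad a := hcon a ha
      have hbb : bad b := hcon b hb
      have hfa : f a = hba.choose := by simp [hf, hba]
      have hfb : f b = hbb.choose := by simp [hf, hbb]
      obtain ⟨hpa, hda⟩ := hba.choose_spec
      obtain ⟨hpb, hdb⟩ := hbb.choose_spec
      simp only [hS, Finset.coe_Icc, Set.mem_Icc] at ha hb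
      have hka := (key a ha.1 _ hpa hda).2
      have hkb := (key b hb.1 _ hpb hdb).2
      rw [← hfa] at hka hpa
      rw [← hfb] at hkb hpb
      rw [hab] at hka hpa
      set p := f b
      set K := ⌈ε * Real.log x⌉₊
      -- p^K divides |a - b|, which is positive and ≤ N
      have h2p : 2 ≤ p := hpb.two_le
      have hpow : N < p ^ K := by
        calc N < 2 ^ N := Nat.lt_two_pow_self
          _ ≤ 2 ^ K := Nat.pow_le_pow_right (by norm_num) hKN
          _ ≤ p ^ K := Nat.pow_le_pow_left h2p K
      rcases Nat.lt_or_ge a b with hlt | hge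
      · have hd : p ^ K ∣ b - a := Nat.dvd_sub hkb hka
        have : p ^ K ≤ b - a := Nat.le_of_dvd (by omega) hd
        omega
      · have hlt : b < a := by omega
        have hd : p ^ K ∣ a - b := Nat.dvd_sub hka hkb
        have : p ^ K ≤ a - b := Nat.le_of_dvd (by omega) hd
        omega
    have hmaps : ∀ m ∈ S, f m ∈ (Finset.Icc 2 M).filter Nat.Prime := by
      intro m hm
      have hbm : bad m := hcon m hm
      have hfm : f m = hbm.choose := by simp [hf, hbm]
      obtain ⟨hp, hd⟩ := hbm.choose_spec
      simp only [hS, Finset.mem_Icc] at hm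
      have := (key m hm.1 _ hp hd).1
      rw [← hfm] at this hp
      simp only [Finset.mem_filter, Finset.mem_Icc]
      exact ⟨⟨this.1, this.2⟩, hp⟩
    have hcard := Finset.card_le_card_of_injOn f hmaps hinj
    have hScard : S.card = N + 1 := by rw [hS, Nat.card_Icc]; omega
    have h1 : ((Finset.Icc 2 M).filter Nat.Prime).card ≤ M + 1 - 2 := by
      simpa [Nat.card_Icc] using Finset.card_filter_le (Finset.Icc 2 M) Nat.Prime
    rw [hScard] at hcard
    omega
  obtain ⟨m, hmS, hmgood⟩ := hgood
  simp only [hS, Finset.mem_Icc] at hmS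
  refine ⟨m, by omega, hmS.1, ?_, hmgood⟩
  have hME : (M : ℝ) ≤ E := Nat.floor_le (le_of_lt (Real.exp_pos _))
  have : (m : ℝ) ≤ (x : ℝ) + N := by exact_mod_cast hmS.2
  have hNE : (N : ℝ) ≤ E + 1 := by push_cast [hN]; linarith
  linarith
end

section
/- Let n ≥ 2 and h ≥ 2 be integers, and let i ≥ 2. Suppose n is not divisible by p^i for any prime p ≤ h. Then the number of positive integers b with b^i ∣ n is at most 2^{log n/(i·log h)}. -/
theorem count_power_divisors_le (n h i : ℕ) (hn : 2 ≤ n) (hh : 2 ≤ h) (hi : 2 ≤ i)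
    (hfree : ∀ p : ℕ, p.Prime → p ≤ h → ¬ p ^ i ∣ n) :
    (Nat.card {b : ℕ // b ^ i ∣ n} : ℝ) ≤
      2 ^ (Real.log n / (i * Real.log h)) := by
  have hn0 : n ≠ 0 := by omega
  have hi0 : i ≠ 0 := by omega
  set α : ℕ → ℕ := fun p => n.factorization p with hα
  set e : ℕ → ℕ := fun p => α p / i with he
  set m : ℕ := ∏ p ∈ n.primeFactors, p ^ e p with hm
  have hm0 : m ≠ 0 := by
    refine Finset.prod_ne_zero_iff.mpr fun p hp => ?_
    exact pow_ne_zero _ (Nat.prime_of_mem_primeFactors hp).pos.ne'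
  -- every b with b^i ∣ n divides m
  have hdvd : ∀ b : ℕ, b ^ i ∣ n → b ∣ m := by
    intro b hb
    have hb0 : b ≠ 0 := by
      rintro rfl
      rw [zero_pow hi0] at hb
      exact hn0 (Nat.eq_zero_of_zero_dvd hb)
    have hble : (b ^ i).factorization ≤ n.factorization :=
      (Nat.factorization_le_iff_dvd (pow_ne_zero _ hb0) hn0).mpr hb
    have hβ : ∀ p, b.factorization p ≤ e p := by
      intro p
      have h1 : i * b.factorization p ≤ α p := by
        have := hble p
        rwa [Nat.factorization_pow, Finsupp.smul_apply, smul_eq_mul] at this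
      exact Nat.le_div_iff_mul_le (by omega) |>.mpr (by rw [Nat.mul_comm]; exact h1)
    have hbn : b ∣ n := (dvd_pow_self b hi0).trans hb
    have hsub : b.primeFactors ⊆ n.primeFactors := Nat.primeFactors_mono hbn hn0
    have h2 : ∏ p ∈ b.primeFactors, p ^ b.factorization p = b := by
      rw [← Nat.support_factorization]
      exact Nat.factorization_prod_pow_eq_self hb0
    have hbeq : b = ∏ p ∈ n.primeFactors, p ^ b.factorization p := by
      conv_lhs => rw [← h2]
      refine Finset.prod_subset hsub fun p _ hp => ?_
      rw [Finsupp.notMem_support_iff.mp (by rwa [Nat.support_factorization]), pow_zero]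
    rw [hbeq, hm]
    exact Finset.prod_dvd_prod_of_dvd _ _ fun p _ => pow_dvd_pow p (hβ p)
  -- count ≤ number of divisors of m
  have hcard1 : Nat.card {b : ℕ // b ^ i ∣ n} ≤ m.divisors.card := by
    rw [← Nat.card_eq_finsetCard]
    exact Nat.card_le_card_of_injective
      (fun b => (⟨b.1, Nat.mem_divisors.mpr ⟨hdvd b.1 b.2, hm0⟩⟩ : m.divisors))
      (fun a b hab => Subtype.ext (by simpa using congrArg Subtype.val hab))
  -- factorization of m
  have hmf : ∀ q, m.factorization q = if q ∈ n.primeFactors then e q else 0 := by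
    intro q
    rw [hm, Nat.factorization_prod (fun p hp =>
      pow_ne_zero _ (Nat.prime_of_mem_primeFactors hp).pos.ne'), Finset.sum_apply']
    have hterm : ∀ p ∈ n.primeFactors, ((p ^ e p).factorization) q
        = if p = q then e p else 0 := fun p hp => by
      rw [(Nat.prime_of_mem_primeFactors hp).factorization_pow, Finsupp.single_apply]
    rw [Finset.sum_congr rfl hterm, Finset.sum_ite_eq' n.primeFactors q e]
  -- divisor count bound
  have hcard2 : m.divisors.card ≤ ∏ p ∈ n.primeFactors, (e p + 1) := by
    rw [Nat.card_divisors hm0]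
    have hsub : m.primeFactors ⊆ n.primeFactors := by
      intro p hp
      by_contra hpn
      have h1 : m.factorization p ≠ 0 := by
        rw [← Nat.support_factorization] at hp
        exact Finsupp.mem_support_iff.mp hp
      rw [hmf, if_neg hpn] at h1
      exact h1 rfl
    calc m.primeFactors.prod (m.factorization · + 1)
        ≤ ∏ p ∈ n.primeFactors, (m.factorization p + 1) :=
          Finset.prod_le_prod_of_subset_of_one_le' hsub (fun p _ _ => Nat.le_add_left 1 _)
      _ = ∏ p ∈ n.primeFactors, (e p + 1) :=
          Finset.prod_congr rfl fun p hp => by rw [hmf, if_pos hp]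
  -- restrict to primes with large exponent
  set S : Finset ℕ := n.primeFactors.filter (fun p => i ≤ α p) with hS
  have hprod_eq : ∏ p ∈ n.primeFactors, (e p + 1) = ∏ p ∈ S, (e p + 1) := by
    refine (Finset.prod_subset (Finset.filter_subset _ _) fun p hp hpS => ?_).symm
    have : α p < i := by
      by_contra hc
      exact hpS (Finset.mem_filter.mpr ⟨hp, by omega⟩)
    rw [he]
    simp [Nat.div_eq_of_lt this]
  have hSh : ∀ p ∈ S, h < p := by
    intro p hp
    rcases Finset.mem_filter.mp hp with ⟨hp1, hp2⟩
    by_contra hc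
    push_neg at hc
    exact hfree p (Nat.prime_of_mem_primeFactors hp1)
      hc (((Nat.prime_of_mem_primeFactors hp1).pow_dvd_iff_le_factorization hn0).mpr hp2)
  have hcount : Nat.card {b : ℕ // b ^ i ∣ n} ≤ ∏ p ∈ S, (e p + 1) :=
    hcard1.trans (hcard2.trans hprod_eq.le)
  -- real-number bounds
  have hi' : (0:ℝ) < i := by positivity
  have hfactor : ∀ p ∈ S, ((e p : ℝ) + 1) ≤ (2:ℝ) ^ ((α p : ℝ) / i) := by
    intro p _
    have h1 : ((e p : ℝ) + 1) ≤ (2:ℝ) ^ (e p : ℕ) := by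
      exact_mod_cast Nat.lt_two_pow_self (n := e p)
    refine h1.trans ?_
    rw [← Real.rpow_natCast 2 (e p)]
    refine Real.rpow_le_rpow_of_exponent_le one_le_two ?_
    rw [le_div_iff₀ hi']
    exact_mod_cast Nat.div_mul_le_self (α p) i
  have hprod_le : (∏ p ∈ S, ((e p : ℝ) + 1)) ≤ (2:ℝ) ^ ((∑ p ∈ S, (α p : ℝ)) / i) := by
    rw [Finset.sum_div, Real.rpow_sum_of_pos two_pos]
    exact Finset.prod_le_prod (fun p _ => by positivity) hfactor
  -- sum of exponents bound
  have hlogh : (0:ℝ) < Real.log h :=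
    Real.log_pos (by exact_mod_cast hh)
  have hnat : h ^ (∑ p ∈ S, α p) ≤ n := by
    have h1 : ∏ p ∈ S, p ^ α p ∣ n := by
      have hneq : ∏ p ∈ n.primeFactors, p ^ α p = n := by
        rw [← Nat.support_factorization]
        exact Nat.factorization_prod_pow_eq_self hn0
      rw [← hneq]
      exact Finset.prod_dvd_prod_of_subset S n.primeFactors _ (Finset.filter_subset _ _)
    calc h ^ (∑ p ∈ S, α p) = ∏ p ∈ S, h ^ α p := by rw [Finset.prod_pow_eq_pow_sum]
      _ ≤ ∏ p ∈ S, p ^ α p :=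
          Finset.prod_le_prod' fun p hp => Nat.pow_le_pow_left (hSh p hp).le _
      _ ≤ n := Nat.le_of_dvd (by omega) h1
  have hsum : (∑ p ∈ S, (α p : ℝ)) * Real.log h ≤ Real.log n := by
    have h2 : ((h:ℝ)) ^ (∑ p ∈ S, α p) ≤ (n:ℝ) := by exact_mod_cast hnat
    have h3 := Real.log_le_log (by positivity) h2
    rwa [Real.log_pow, Nat.cast_sum] at h3
  have hexp : (∑ p ∈ S, (α p : ℝ)) / i ≤ Real.log n / (i * Real.log h) := by
    rw [div_le_div_iff₀ hi' (by positivity)]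
    calc (∑ p ∈ S, (α p : ℝ)) * (i * Real.log h)
        = ((∑ p ∈ S, (α p : ℝ)) * Real.log h) * i := by ring
      _ ≤ Real.log n * i := by
          exact mul_le_mul_of_nonneg_right hsum hi'.le
  calc (Nat.card {b : ℕ // b ^ i ∣ n} : ℝ) ≤ (∏ p ∈ S, ((e p : ℝ) + 1)) := by
        push_cast [← Nat.cast_prod]
        exact_mod_cast hcount
    _ ≤ (2:ℝ) ^ ((∑ p ∈ S, (α p : ℝ)) / i) := hprod_le
    _ ≤ 2 ^ (Real.log n / (i * Real.log h)) :=
        Real.rpow_le_rpow_of_exponent_le one_le_two hexp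
end

section
/- Let k ≥ 6 be even, h ≥ 3 real, and n ≥ 2 an integer not divisible by p^{k/2−1} for any prime p ≤ h. Then d(n; k/2, k/2−1) ≤ exp(log 2·(log n/((k/2−1)·log h) + log n/((k/2)·log h))), where d(n; i, j) counts triples (a,b,c) with n = a·b^i·c^j. -/
lemma fin_aux (n t : ℕ) (hn : n ≠ 0) (ht : 1 ≤ t) :
    Finite {b : ℕ // 0 < b ∧ b ^ t ∣ n} := by
  apply Finite.of_injective (fun b : {b : ℕ // 0 < b ∧ b ^ t ∣ n} =>
    (⟨b.1, by
      have hbd : (b : ℕ) ∣ n := dvd_trans (dvd_pow_self b.1 (by omega)) b.2.2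
      have := Nat.le_of_dvd (Nat.pos_of_ne_zero hn) hbd
      omega⟩ : Fin (n + 1)))
  intro a b hab
  ext
  simpa using congrArg Fin.val hab

lemma key (n t : ℕ) (h : ℝ) (hn : 2 ≤ n) (ht : 1 ≤ t) (hh : 1 < h)
    (hpr : ∀ p : ℕ, p.Prime → p ^ t ∣ n → h < (p : ℝ)) :
    ((Nat.card {b : ℕ // 0 < b ∧ b ^ t ∣ n} : ℕ) : ℝ) ≤
      Real.exp (Real.log 2 * (Real.log n / (t * Real.log h))) := by
  have hn0 : n ≠ 0 := by omega
  have ht0 : 0 < t := ht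
  set g : ℕ →₀ ℕ := (n.factorization).mapRange (· / t) (Nat.zero_div t) with hg
  -- membership of factorizations in Iic g
  have hmem : ∀ b : {b : ℕ // 0 < b ∧ b ^ t ∣ n},
      (b : ℕ).factorization ∈ Finset.Iic g := by
    rintro ⟨b, hb0, hbd⟩
    rw [Finset.mem_Iic, Finsupp.le_def]
    intro p
    have hdvd : (b ^ t).factorization ≤ n.factorization :=
      (Nat.factorization_le_iff_dvd (pow_ne_zero t (by omega)) hn0).mpr hbd
    have := hdvd p
    rw [Nat.factorization_pow] at this
    simp only [Finsupp.smul_apply, smul_eq_mul] at this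
    have : t * b.factorization p ≤ n.factorization p := this
    simp only [hg, Finsupp.mapRange_apply]
    exact Nat.le_div_iff_mul_le ht0 |>.mpr (by rwa [Nat.mul_comm] at this)
  have hinj : Function.Injective (fun b : {b : ℕ // 0 < b ∧ b ^ t ∣ n} =>
      (⟨(b : ℕ).factorization, hmem b⟩ : (Finset.Iic g : Finset (ℕ →₀ ℕ)))) := by
    rintro ⟨a, ha0, _⟩ ⟨b, hb0, _⟩ hab
    have : a.factorization = b.factorization := by
      simpa using congrArg Subtype.val hab
    ext
    exact Nat.factorization_inj (by simpa using ha0.ne') (by simpa using hb0.ne') this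
  have hcard : Nat.card {b : ℕ // 0 < b ∧ b ^ t ∣ n} ≤ (Finset.Iic g).card := by
    have h1 := Nat.card_le_card_of_injective _ hinj
    rwa [Nat.card_eq_finsetCard] at h1
  -- card of Iic
  have hcard2 : (Finset.Iic g).card = ∏ p ∈ g.support, (g p + 1) := by
    rw [Finsupp.card_Iic]
    simp [Nat.card_Iic]
  set S : ℕ := ∑ p ∈ g.support, g p with hS
  have hcard3 : (Finset.Iic g).card ≤ 2 ^ S := by
    rw [hcard2, hS, ← Finset.prod_pow_eq_pow_sum]
    apply Finset.prod_le_prod'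
    intro p _
    exact Nat.lt_two_pow_self (n := g p)
  have hlh : 0 < Real.log h := Real.log_pos hh
  have hlogn : Real.log n = ∑ p ∈ n.primeFactors, (n.factorization p : ℝ) * Real.log p := by
    nth_rewrite 1 [← Nat.factorization_prod_pow_eq_self hn0]
    rw [Finsupp.prod]
    push_cast
    rw [Real.log_prod]
    · rw [Nat.support_factorization]
      exact Finset.sum_congr rfl fun p hp => Real.log_pow _ _
    · intro p hp
      have hp2 : p.Prime := Nat.prime_of_mem_primeFactors
        (by rwa [Nat.support_factorization] at hp)
      exact pow_ne_zero _ (by exact_mod_cast hp2.pos.ne')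
  have hsub : g.support ⊆ n.primeFactors := by
    intro p hp
    rw [← Nat.support_factorization]
    exact Finsupp.support_mapRange hp
  have hfacts : ∀ p ∈ g.support, h < (p : ℝ) ∧ g p * t ≤ n.factorization p := by
    intro p hp
    have hpp : p.Prime := Nat.prime_of_mem_primeFactors (hsub hp)
    have hg0 : g p ≠ 0 := Finsupp.mem_support_iff.mp hp
    have hga : g p = n.factorization p / t := rfl
    have hta : t ≤ n.factorization p := by
      by_contra hc
      rw [hga] at hg0
      exact hg0 (Nat.div_eq_of_lt (by omega))
    have hle : g p * t ≤ n.factorization p := by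
      rw [hga]; exact Nat.div_mul_le_self _ _
    refine ⟨hpr _ hpp ?_, hle⟩
    exact (pow_dvd_pow p hta).trans (Nat.ordProj_dvd n p)
  have hsum : (S : ℝ) * ((t : ℝ) * Real.log h) ≤ Real.log n := by
    rw [hlogn, hS]
    push_cast
    rw [Finset.sum_mul]
    calc ∑ p ∈ g.support, (g p : ℝ) * ((t : ℝ) * Real.log h)
        ≤ ∑ p ∈ g.support, (n.factorization p : ℝ) * Real.log p := by
          apply Finset.sum_le_sum
          intro p hp
          obtain ⟨h1, h2⟩ := hfacts p hp
          have hpl : Real.log h ≤ Real.log p := Real.log_le_log (by linarith) h1.le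
          have h2' : (g p : ℝ) * t ≤ (n.factorization p : ℝ) := by exact_mod_cast h2
          have := mul_le_mul h2' hpl hlh.le (by positivity)
          linarith [this]
      _ ≤ ∑ p ∈ n.primeFactors, (n.factorization p : ℝ) * Real.log p := by
          apply Finset.sum_le_sum_of_subset_of_nonneg hsub
          intro p hp _
          have hpp : p.Prime := Nat.prime_of_mem_primeFactors hp
          have : (0:ℝ) ≤ Real.log p := Real.log_nonneg (by exact_mod_cast hpp.one_lt.le)
          positivity
  calc ((Nat.card {b : ℕ // 0 < b ∧ b ^ t ∣ n} : ℕ) : ℝ)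
      ≤ ((2 ^ S : ℕ) : ℝ) := by exact_mod_cast le_trans hcard hcard3
    _ = Real.exp ((S : ℝ) * Real.log 2) := by
        push_cast
        rw [show (2:ℝ) = Real.exp (Real.log 2) from (Real.exp_log two_pos).symm,
          ← Real.exp_nat_mul]
        norm_num [Real.exp_log]
    _ ≤ _ := by
        rw [Real.exp_le_exp, mul_comm (Real.log 2)]
        apply mul_le_mul_of_nonneg_right _ (Real.log_nonneg one_le_two)
        rw [le_div_iff₀ (mul_pos (by exact_mod_cast ht0) hlh)]
        exact hsum

theorem factor_count_bound (k n : ℕ) (h : ℝ) (hk : 6 ≤ k) (hke : Even k)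
    (hh : 3 ≤ h) (hn : 2 ≤ n)
    (hfree : ∀ p : ℕ, p.Prime → (p : ℝ) ≤ h → ¬ p ^ (k / 2 - 1) ∣ n) :
    ((Nat.card {t : ℕ × ℕ × ℕ //
        0 < t.1 ∧ 0 < t.2.1 ∧ 0 < t.2.2 ∧
        n = t.1 * t.2.1 ^ (k / 2) * t.2.2 ^ (k / 2 - 1)} : ℕ) : ℝ) ≤
      Real.exp (Real.log 2 *
        (Real.log n / (((k : ℝ) / 2 - 1) * Real.log h) +
          Real.log n / (((k : ℝ) / 2) * Real.log h))) := by
  obtain ⟨m, hm⟩ := hke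
  have hK : k / 2 = m := by omega
  have hm3 : 3 ≤ m := by omega
  have hn0 : n ≠ 0 := by omega
  have hh1 : (1 : ℝ) < h := by linarith
  have hp1 : ∀ p : ℕ, p.Prime → p ^ (m - 1) ∣ n → h < (p : ℝ) := by
    intro p pp hd
    by_contra hle
    exact hfree p pp (not_lt.mp hle) (by rwa [hK])
  have hp2 : ∀ p : ℕ, p.Prime → p ^ m ∣ n → h < (p : ℝ) := fun p pp hd =>
    hp1 p pp ((pow_dvd_pow p (by omega)).trans hd)
  rw [hK]
  have hkr : ((k : ℝ) / 2) = (m : ℝ) := by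
    rw [hm]; push_cast; ring
  rw [hkr]
  haveI F1 : Finite {b : ℕ // 0 < b ∧ b ^ m ∣ n} := fin_aux n m hn0 (by omega)
  haveI F2 : Finite {c : ℕ // 0 < c ∧ c ^ (m - 1) ∣ n} := fin_aux n (m - 1) hn0 (by omega)
  set T := {t : ℕ × ℕ × ℕ // 0 < t.1 ∧ 0 < t.2.1 ∧ 0 < t.2.2 ∧
      n = t.1 * t.2.1 ^ m * t.2.2 ^ (m - 1)} with hT
  have hinj : Function.Injective (fun x : T =>
      ((⟨x.1.2.1, x.2.2.1, ⟨x.1.1 * x.1.2.2 ^ (m - 1),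
          x.2.2.2.2.trans (by ring)⟩⟩ : {b : ℕ // 0 < b ∧ b ^ m ∣ n}),
       (⟨x.1.2.2, x.2.2.2.1, ⟨x.1.1 * x.1.2.1 ^ m,
          x.2.2.2.2.trans (by ring)⟩⟩ : {c : ℕ // 0 < c ∧ c ^ (m - 1) ∣ n}))) := by
    rintro ⟨⟨a1, b1, c1⟩, ha1, hb1, hc1, he1⟩ ⟨⟨a2, b2, c2⟩, ha2, hb2, hc2, he2⟩ hab
    simp only [Prod.mk.injEq, Subtype.mk.injEq] at hab
    obtain ⟨hb, hc⟩ := hab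
    subst hb; subst hc
    have hpos : 0 < b1 ^ m * c1 ^ (m - 1) := by positivity
    have ha : a1 = a2 := Nat.eq_of_mul_eq_mul_right hpos (by
      rw [← mul_assoc, ← mul_assoc, ← he1, ← he2])
    subst ha
    rfl
  have hcard : Nat.card T ≤
      Nat.card {b : ℕ // 0 < b ∧ b ^ m ∣ n} * Nat.card {c : ℕ // 0 < c ∧ c ^ (m - 1) ∣ n} := by
    have := Nat.card_le_card_of_injective _ hinj
    rwa [Nat.card_prod] at this
  have k1 := key n m h hn (by omega) hh1 hp2
  have k2 := key n (m - 1) h hn (by omega) hh1 hp1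
  calc ((Nat.card T : ℕ) : ℝ)
      ≤ ((Nat.card {b : ℕ // 0 < b ∧ b ^ m ∣ n} : ℕ) : ℝ) *
        ((Nat.card {c : ℕ // 0 < c ∧ c ^ (m - 1) ∣ n} : ℕ) : ℝ) := by exact_mod_cast hcard
    _ ≤ Real.exp (Real.log 2 * (Real.log n / ((m : ℝ) * Real.log h))) *
        Real.exp (Real.log 2 * (Real.log n / (((m : ℕ) - 1 : ℕ) * Real.log h))) :=
        mul_le_mul k1 k2 (by positivity) (Real.exp_pos _).le
    _ = _ := by
        rw [← Real.exp_add]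
        congr 1
        have hc : (((m - 1 : ℕ)) : ℝ) = (m : ℝ) - 1 := by
          have : 1 ≤ m := by omega
          push_cast [this]
          ring
        rw [hc]
        ring
end
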